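/- Let ρ₁, ρ₂ ∈ (0,1] and μ₁, μ₂ > 0 satisfy 1 − (ρ₁ + ρ₂)/(ρ₁ρ₂) < μ₁μ₂ < 1. Then the zero equilibrium E₀ = (0,0) of Kopel's model is stable: every complex eigenvalue λ of the Jacobian matrix J(0,0), which has rows (1−ρ₁, ρ₁μ₁) and (ρ₂μ₂, 1−ρ₂), satisfies |λ| < 1. -/

import Mathlib

/-- Stability of the zero equilibrium `E₀ = (0,0)` of Kopel's model:
if `1 - (ρ₁ + ρ₂)/(ρ₁ ρ₂) < μ₁ μ₂ < 1`, then all complex eigenvalues of the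
Jacobian at the origin have modulus less than 1. -/
theorem kopel_E0_stable (ρ₁ ρ₂ μ₁ μ₂ : ℝ)
    (hρ₁ : ρ₁ ∈ Set.Ioc (0 : ℝ) 1) (hρ₂ : ρ₂ ∈ Set.Ioc (0 : ℝ) 1)
    (hμ₁ : 0 < μ₁) (hμ₂ : 0 < μ₂)
    (hlo : 1 - (ρ₁ + ρ₂) / (ρ₁ * ρ₂) < μ₁ * μ₂) (hhi : μ₁ * μ₂ < 1) :
    ∀ lam ∈ spectrum ℂ
      (!![((1 - ρ₁ : ℝ) : ℂ), ((ρ₁ * μ₁ : ℝ) : ℂ);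
          ((ρ₂ * μ₂ : ℝ) : ℂ), ((1 - ρ₂ : ℝ) : ℂ)] : Matrix (Fin 2) (Fin 2) ℂ),
      ‖lam‖ < 1 := by
  obtain ⟨hρ₁0, hρ₁1⟩ := hρ₁
  obtain ⟨hρ₂0, hρ₂1⟩ := hρ₂
  intro lam hlam
  have hdet : (lam - ((1-ρ₁:ℝ):ℂ)) * (lam - ((1-ρ₂:ℝ):ℂ)) - ((ρ₁*μ₁:ℝ):ℂ) * ((ρ₂*μ₂:ℝ):ℂ) = 0 := by
    rw [spectrum.mem_iff] at hlam
    by_contra h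
    apply hlam
    rw [Matrix.isUnit_iff_isUnit_det, isUnit_iff_ne_zero]
    intro hd
    apply h
    rw [← hd]
    simp [Matrix.det_fin_two, Matrix.algebraMap_matrix_apply, Matrix.sub_apply]
  set a := lam.re with ha
  set b := lam.im with hb
  -- real and imaginary parts of the characteristic equation
  have hre : (a - (1-ρ₁)) * (a - (1-ρ₂)) - b * b - ρ₁*μ₁*(ρ₂*μ₂) = 0 := by
    have := congrArg Complex.re hdet
    simpa [Complex.sub_re, Complex.mul_re, Complex.ofReal_re, Complex.ofReal_im] using this
  have him : (a - (1-ρ₁)) * b + b * (a - (1-ρ₂)) = 0 := by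
    have := congrArg Complex.im hdet
    simpa [Complex.sub_im, Complex.mul_im, Complex.ofReal_re, Complex.ofReal_im] using this
  have hb0 : b = 0 := by
    by_contra hbne
    have hbpos : 0 < b * b := mul_self_pos.mpr hbne
    have h2a : a - (1-ρ₁) + (a - (1-ρ₂)) = 0 := by
      have hfac : b * (a - (1-ρ₁) + (a - (1-ρ₂))) = 0 := by linarith [him]
      rcases mul_eq_zero.mp hfac with h | h
      · exact absurd h hbne
      · linarith
    -- then b² = -((a-(1-ρ₁))² + positive) < 0, contradiction
    nlinarith [sq_nonneg (a - (1-ρ₁)), mul_pos (mul_pos hρ₁0 hμ₁) (mul_pos hρ₂0 hμ₂)]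
  have hmain : (a - (1-ρ₁)) * (a - (1-ρ₂)) - ρ₁*μ₁*(ρ₂*μ₂) = 0 := by
    rw [hb0] at hre; linarith
  have hlt1 : a < 1 := by
    nlinarith [mul_pos (mul_pos hρ₁0 hμ₁) (mul_pos hρ₂0 hμ₂), mul_pos hρ₁0 hρ₂0,
      sq_nonneg (a - 1), sq_nonneg (ρ₁ - ρ₂), mul_pos hμ₁ hμ₂]
  have hgt1 : -1 < a := by
    nlinarith [mul_pos (mul_pos hρ₁0 hμ₁) (mul_pos hρ₂0 hμ₂), mul_pos hρ₁0 hρ₂0,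
      sq_nonneg (a + 1), sq_nonneg (ρ₁ - ρ₂), mul_pos hμ₁ hμ₂,
      mul_nonneg (sub_nonneg.mpr hρ₁1) (sub_nonneg.mpr hρ₂1)]
  have hlam_eq : lam = (a : ℂ) := Complex.ext rfl (by simpa using hb0)
  rw [hlam_eq, Complex.norm_real, Real.norm_eq_abs, abs_lt]
  exact ⟨hgt1, hlt1⟩
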